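/- Let p be a prime with p ≠ 2. Then the matrix [[1, p], [−1, 0]] ∈ M_2(ℤ_(p)) is very clean, but it is not strongly clean. -/

import Mathlib

/-- An element `a` of a ring is *very clean* if there is an idempotent `e` commuting with `a`
such that `a - e` or `a + e` is a unit. -/
def IsVeryClean {R : Type*} [Ring R] (a : R) : Prop :=
  ∃ e : R, IsIdempotentElem e ∧ a * e = e * a ∧ (IsUnit (a - e) ∨ IsUnit (a + e))

/-- A ring is *very clean* if every element is very clean. -/
def VeryCleanRing (R : Type*) [Ring R] : Prop :=
  ∀ a : R, IsVeryClean a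

/-- An element `a` of a ring is *strongly clean* if there is an idempotent `e` commuting with `a`
such that `a - e` is a unit. -/
def IsStronglyClean {R : Type*} [Ring R] (a : R) : Prop :=
  ∃ e : R, IsIdempotentElem e ∧ a * e = e * a ∧ IsUnit (a - e)

/-- A ring is *strongly clean* if every element is strongly clean. -/
def StronglyCleanRing (R : Type*) [Ring R] : Prop :=
  ∀ a : R, IsStronglyClean a

/-- For a prime `p`, the localization `ℤ_(p)` of `ℤ` at `p`, realized as the subring of `ℚ`
consisting of all fractions `m / n` with `m, n ∈ ℤ` and `p ∤ n`. -/
def ZLoc (p : ℕ) (hp : p.Prime) : Subring ℚ where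
  carrier := {x : ℚ | ∃ m n : ℤ, ¬ ((p : ℤ) ∣ n) ∧ x = m / n}
  zero_mem' := ⟨0, 1, fun h => hp.one_lt.ne' (Nat.dvd_one.mp (by exact_mod_cast h)), by simp⟩
  one_mem' := ⟨1, 1, fun h => hp.one_lt.ne' (Nat.dvd_one.mp (by exact_mod_cast h)), by simp⟩
  add_mem' := by
    rintro x y ⟨m, n, hn, rfl⟩ ⟨m', n', hn', rfl⟩
    refine ⟨m * n' + m' * n, n * n', fun h => ?_, ?_⟩
    · rcases (Int.Prime.dvd_mul' (by exact_mod_cast hp) h) with h | h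
      exacts [hn h, hn' h]
    · have h0 : (n : ℚ) ≠ 0 := Int.cast_ne_zero.mpr (fun h0 => hn (h0 ▸ dvd_zero _))
      have h0' : (n' : ℚ) ≠ 0 := Int.cast_ne_zero.mpr (fun h0 => hn' (h0 ▸ dvd_zero _))
      field_simp
      push_cast
      ring
  neg_mem' := by
    rintro x ⟨m, n, hn, rfl⟩
    exact ⟨-m, n, hn, by push_cast; ring⟩
  mul_mem' := by
    rintro x y ⟨m, n, hn, rfl⟩ ⟨m', n', hn', rfl⟩
    refine ⟨m * m', n * n', fun h => ?_, ?_⟩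
    · rcases (Int.Prime.dvd_mul' (by exact_mod_cast hp) h) with h | h
      exacts [hn h, hn' h]
    · push_cast
      rw [div_mul_div_comm]


section Aux

variable {p : ℕ} {hp : p.Prime}

/-- A unit of `ZLoc p hp` cannot have value `p` in `ℚ`. -/
lemma not_isUnit_of_val_eq_p (x : ↥(ZLoc p hp)) (hx : (x : ℚ) = p) : ¬ IsUnit x := by
  intro hu
  obtain ⟨y, hy⟩ := hu.exists_right_inv
  have h1 : (x : ℚ) * (y : ℚ) = 1 := by exact_mod_cast congrArg Subtype.val hy
  obtain ⟨m, n, hn, hmn⟩ := y.2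
  have hn0 : (n : ℚ) ≠ 0 := Int.cast_ne_zero.mpr (fun h0 => hn (h0 ▸ dvd_zero _))
  rw [hx, hmn] at h1
  have h2 : (p : ℚ) * m = n := by field_simp at h1; linarith
  have h3 : (p : ℤ) * m = n := by exact_mod_cast h2
  exact hn ⟨m, h3.symm⟩

end Aux

theorem example_matrix_very_clean_not_strongly_clean (p : ℕ) (hp : p.Prime) (hp2 : p ≠ 2) :
    IsVeryClean (!![(1 : ↥(ZLoc p hp)), (p : ↥(ZLoc p hp)); -1, 0]) ∧
    ¬ IsStronglyClean (!![(1 : ↥(ZLoc p hp)), (p : ↥(ZLoc p hp)); -1, 0]) := by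
  have hp2le : (2 : ℚ) ≤ (p : ℚ) := by exact_mod_cast hp.two_le
  constructor
  · -- very clean with e = 1, a + 1 a unit
    refine ⟨1, IsIdempotentElem.one, by rw [mul_one, one_mul], Or.inr ?_⟩
    have hM : (!![(1 : ↥(ZLoc p hp)), (p : ↥(ZLoc p hp)); -1, 0] + 1)
        = !![(2 : ↥(ZLoc p hp)), (p : ↥(ZLoc p hp)); -1, 1] := by
      rw [Matrix.one_fin_two]
      norm_num [← Matrix.ext_iff, Fin.forall_fin_two]
    rw [hM, Matrix.isUnit_iff_isUnit_det, Matrix.det_fin_two_of]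
    have hdet : (2 : ↥(ZLoc p hp)) * 1 - (p : ↥(ZLoc p hp)) * (-1) = 2 + (p : ↥(ZLoc p hp)) := by
      ring
    rw [hdet]
    have hdvd : ¬ ((p : ℤ) ∣ (2 + p)) := by
      intro h
      have h2 : (p : ℤ) ∣ 2 := (dvd_add_right (dvd_refl _)).mp (by rwa [add_comm] at h)
      have : p ∣ 2 := by exact_mod_cast h2
      exact hp2 ((Nat.prime_dvd_prime_iff_eq hp Nat.prime_two).mp this)
    have hmem : ((2 + (p : ℚ))⁻¹ : ℚ) ∈ ZLoc p hp := by
      refine ⟨1, 2 + p, hdvd, ?_⟩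
      push_cast
      rw [one_div]
    have hne : (2 + (p : ℚ)) ≠ 0 := by positivity
    refine IsUnit.of_mul_eq_one ⟨_, hmem⟩ ?_
    apply Subtype.ext
    push_cast
    exact mul_inv_cancel₀ hne
  · rintro ⟨e, he, hcomm, hunit⟩
    obtain ⟨a, b, c, d, heq⟩ : ∃ a b c d, e = !![a, b; c, d] :=
      ⟨e 0 0, e 0 1, e 1 0, e 1 1, by ext i j; fin_cases i <;> fin_cases j <;> rfl⟩
    rw [heq] at he hcomm hunit
    rw [show (IsIdempotentElem !![a,b;c,d]) = (!![a,b;c,d] * !![a,b;c,d] = !![a,b;c,d]) from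
      rfl] at he
    simp only [Matrix.mul_fin_two, ← Matrix.ext_iff, Fin.forall_fin_two, Matrix.of_apply,
      Matrix.cons_val', Matrix.cons_val_zero, Matrix.cons_val_one, Matrix.head_cons,
      Matrix.head_fin_const, Matrix.empty_val', Matrix.cons_val_fin_one] at he hcomm
    obtain ⟨⟨hc1, hc2⟩, hc3, hc4⟩ := hcomm
    obtain ⟨⟨hi1, hi2⟩, hi3, hi4⟩ := he
    have qc1 := congrArg Subtype.val hc1
    have qc3 := congrArg Subtype.val hc3
    have qi1 := congrArg Subtype.val hi1
    have qi3 := congrArg Subtype.val hi3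
    push_cast at qc1 qc3 qi1 qi3
    -- from commuting: ↑b = -p ↑c and ↑d = ↑a + ↑c
    have hB : (b : ℚ) = -(p : ℚ) * c := by linarith
    have hD : (d : ℚ) = (a : ℚ) + c := by linarith
    have hdetval : (((!![(1 : ↥(ZLoc p hp)), (p : ↥(ZLoc p hp)); -1, 0]
        - !![a, b; c, d]).det : ↥(ZLoc p hp)) : ℚ) = (p : ℚ) := by
      have hsub : (!![(1 : ↥(ZLoc p hp)), (p : ↥(ZLoc p hp)); -1, 0] - !![a, b; c, d])
          = !![1 - a, (p : ↥(ZLoc p hp)) - b; -1 - c, -d] := by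
        ext i j
        fin_cases i <;> fin_cases j <;> simp
      rw [hsub, Matrix.det_fin_two_of]
      push_cast
      have hkey : (c : ℚ) * (2 * (a : ℚ) + c - 1) = 0 := by
        rw [hD] at qi3; linear_combination qi3
      rcases mul_eq_zero.mp hkey with hC0 | hC1
      · -- c = 0 : scalar idempotent, det = p
        have hAA : (a : ℚ) * a = a := by
          rw [hB, hC0] at qi1; simpa using qi1
        rw [hB, hD, hC0]
        ring_nf
        nlinarith [hAA]
      · -- c ≠ 0 : contradiction, no rational root of x^2 - x + p
        exfalso
        have hC : (c : ℚ) = 1 - 2 * a := by linarith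
        rw [hB, hC] at qi1
        nlinarith [sq_nonneg (1 - 2 * (a : ℚ)), qi1]
    exact not_isUnit_of_val_eq_p _ hdetval ((Matrix.isUnit_iff_isUnit_det _).mp hunit)
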